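/- Let ε > 0. The radial function Φ : ℝ³ → ℝ defined by Φ(x) = (max(1 − ε‖x‖₂, 0))⁴ (4ε‖x‖₂ + 1) is of class C² on all of ℝ³ (twice continuously differentiable, including at the origin and across the sphere ‖x‖₂ = 1/ε). -/

import Mathlib

open Filter Real

local notation "E" => EuclideanSpace ℝ (Fin 3)
local notation "⟪" x ", " y "⟫" => inner (𝕜 := ℝ) x y

/-- Derivative of `t ↦ (max t 0)^(n+1)`. -/
lemma maxpow_hasDerivAt (n : ℕ) (hn : 1 ≤ n) (t : ℝ) :
    HasDerivAt (fun u : ℝ => (max u 0) ^ (n + 1)) (((n : ℝ) + 1) * (max t 0) ^ n) t := by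
  have hn0 : n ≠ 0 := by omega
  rcases lt_trichotomy t 0 with ht | ht | ht
  · have h0 : (fun u : ℝ => (max u 0) ^ (n + 1)) =ᶠ[nhds t] fun _ => (0 : ℝ) := by
      filter_upwards [Iio_mem_nhds ht] with u hu
      simp [max_eq_right (le_of_lt (Set.mem_Iio.mp hu))]
    have h1 : HasDerivAt (fun _ : ℝ => (0 : ℝ)) 0 t := hasDerivAt_const t 0
    have h2 := h1.congr_of_eventuallyEq h0
    refine h2.congr_deriv ?_
    simp [max_eq_right ht.le, zero_pow hn0]
  · subst ht
    have hval : ((n : ℝ) + 1) * (max (0 : ℝ) 0) ^ n = 0 := by simp [zero_pow hn0]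
    rw [hval, hasDerivAt_iff_tendsto_slope]
    apply squeeze_zero_norm (a := fun u : ℝ => |u| ^ n)
    · intro u
      rcases eq_or_ne u 0 with rfl | hu
      · simp [slope_def_field, zero_pow hn0]
      · have hmax : |max u 0| ≤ |u| := by
          rcases le_or_gt u 0 with h | h
          · simp [max_eq_right h]
          · simp [max_eq_left h.le, abs_of_pos h]
        have h1 : ‖slope (fun u : ℝ => (max u 0) ^ (n + 1)) 0 u‖
            = |max u 0| ^ (n + 1) / |u| := by
          simp [slope_def_field, abs_div, abs_pow]
        rw [h1, div_le_iff₀ (by positivity : (0:ℝ) < |u|)]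
        calc |max u 0| ^ (n + 1) ≤ |u| ^ (n + 1) :=
              pow_le_pow_left₀ (abs_nonneg _) hmax _
          _ = |u| ^ n * |u| := by ring
    · have h2 : Filter.Tendsto (fun u : ℝ => |u| ^ n) (nhds 0) (nhds 0) := by
        have := ((continuous_abs.pow n).tendsto (0:ℝ))
        simp only [Pi.pow_apply, abs_zero, zero_pow hn0] at this
        exact this
      exact h2.mono_left nhdsWithin_le_nhds
  · have h0 : (fun u : ℝ => (max u 0) ^ (n + 1)) =ᶠ[nhds t] fun u => u ^ (n + 1) := by
      filter_upwards [Ioi_mem_nhds ht] with u hu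
      simp [max_eq_left (le_of_lt (Set.mem_Ioi.mp hu))]
    have h1 := (hasDerivAt_pow (n + 1) t).congr_of_eventuallyEq h0
    refine h1.congr_deriv ?_
    simp [max_eq_left ht.le]

lemma maxpow4_contDiff : ContDiff ℝ 2 (fun u : ℝ => (max u 0) ^ 4) := by
  have h4 : ∀ t : ℝ, HasDerivAt (fun u : ℝ => (max u 0) ^ 4) (4 * (max t 0) ^ 3) t := by
    intro t
    have := maxpow_hasDerivAt 3 (by norm_num) t
    norm_num at this
    exact this
  have h3 : ∀ t : ℝ, HasDerivAt (fun u : ℝ => (max u 0) ^ 3) (3 * (max t 0) ^ 2) t := by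
    intro t
    have := maxpow_hasDerivAt 2 (by norm_num) t
    norm_num at this
    exact this
  rw [show (2 : WithTop ℕ∞) = 1 + 1 by norm_num, contDiff_succ_iff_deriv]
  refine ⟨fun t => (h4 t).differentiableAt, by simp, ?_⟩
  have hd : deriv (fun u : ℝ => (max u 0) ^ 4) = fun t => 4 * (max t 0) ^ 3 :=
    funext fun t => (h4 t).deriv
  rw [hd, contDiff_one_iff_deriv]
  refine ⟨fun t => ((h3 t).const_mul 4).differentiableAt, ?_⟩
  have hd2 : deriv (fun t : ℝ => 4 * (max t 0) ^ 3) = fun t => 4 * (3 * (max t 0) ^ 2) :=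
    funext fun t => ((h3 t).const_mul 4).deriv
  rw [hd2]
  fun_prop

lemma wendland_g_contDiff : ContDiff ℝ 2 (fun t : ℝ => (max (1 - t) 0) ^ 4 * (4 * t + 1)) :=
  (maxpow4_contDiff.comp (contDiff_const.sub contDiff_id)).mul
    ((contDiff_const.mul contDiff_id).add contDiff_const)

/-- Derivative of the norm on `E` away from the origin. -/
lemma norm_hasFDerivAt {x : E} (hx : x ≠ 0) :
    HasFDerivAt (fun y : E => ‖y‖) (‖x‖⁻¹ • innerSL ℝ x) x := by
  have hx' : ‖x‖ ≠ 0 := norm_ne_zero_iff.2 hx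
  have h2 : HasFDerivAt (fun y : E => ‖y‖ ^ 2) ((2 : ℕ) • innerSL ℝ x) x :=
    (hasStrictFDerivAt_norm_sq x).hasFDerivAt
  have hs := h2.sqrt (by positivity : ‖x‖ ^ 2 ≠ 0)
  have hfun : (fun y : E => Real.sqrt (‖y‖ ^ 2)) = fun y : E => ‖y‖ :=
    funext fun y => Real.sqrt_sq (norm_nonneg y)
  rw [hfun] at hs
  refine hs.congr_fderiv ?_
  rw [Real.sqrt_sq (norm_nonneg x)]
  ext w
  simp only [ContinuousLinearMap.coe_smul', Pi.smul_apply, smul_eq_mul, nsmul_eq_mul,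
    Nat.cast_ofNat]
  field_simp
  simp only [Pi.mul_apply, Pi.ofNat_apply]

lemma norm_cube_hasFDerivAt (x : E) :
    HasFDerivAt (fun y : E => ‖y‖ ^ 3) ((3 * ‖x‖) • innerSL ℝ x) x := by
  rcases eq_or_ne x 0 with rfl | hx
  · have h0 : ((3 * ‖(0 : E)‖) • innerSL ℝ (0 : E)) = 0 := by simp
    rw [h0, hasFDerivAt_iff_isLittleO_nhds_zero]
    have hsim : (fun h : E => ‖(0 : E) + h‖ ^ 3 - ‖(0 : E)‖ ^ 3 - (0 : E →L[ℝ] ℝ) h)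
        = fun h : E => ‖h‖ ^ 3 := by
      funext h; simp
    rw [hsim, Asymptotics.isLittleO_iff]
    intro c hc
    filter_upwards [Metric.ball_mem_nhds (0 : E) (show (0:ℝ) < min 1 c by positivity)] with y hy
    have h1 : ‖y‖ < min 1 c := by simpa [dist_zero_right] using hy
    have h2 : ‖y‖ < 1 := lt_of_lt_of_le h1 (min_le_left _ _)
    have h3 : ‖y‖ < c := lt_of_lt_of_le h1 (min_le_right _ _)
    have h4 : (0:ℝ) ≤ ‖y‖ := norm_nonneg y
    have : ‖(‖y‖ ^ 3 : ℝ)‖ = ‖y‖ ^ 3 := by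
      rw [Real.norm_eq_abs, abs_of_nonneg (by positivity)]
    rw [this]
    have h5 : ‖y‖ ^ 2 < c := by nlinarith
    nlinarith [mul_le_mul_of_nonneg_right h5.le h4]
  · have h := (hasDerivAt_pow 3 ‖x‖).comp_hasFDerivAt x (norm_hasFDerivAt hx)
    refine h.congr_fderiv ?_
    ext w
    have hx' : ‖x‖ ≠ 0 := norm_ne_zero_iff.2 hx
    simp only [ContinuousLinearMap.coe_smul', Pi.smul_apply, smul_eq_mul]
    field_simp
    ring

lemma cube_fderiv_hasFDerivAt (v : E) (x : E) :
    HasFDerivAt (fun y : E => 3 * ‖y‖ * ⟪y, v⟫)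
      ((3 * ‖x‖⁻¹ * ⟪x, v⟫) • innerSL ℝ x + (3 * ‖x‖) • innerSL ℝ v) x := by
  rcases eq_or_ne x 0 with rfl | hx
  · have h0 : ((3 * ‖(0:E)‖⁻¹ * ⟪(0:E), v⟫) • innerSL ℝ (0:E) + (3 * ‖(0:E)‖) • innerSL ℝ v)
        = 0 := by simp
    rw [h0, hasFDerivAt_iff_isLittleO_nhds_zero]
    have hsim : (fun h : E => 3 * ‖(0:E) + h‖ * ⟪(0:E) + h, v⟫ - 3 * ‖(0:E)‖ * ⟪(0:E), v⟫
        - (0 : E →L[ℝ] ℝ) h) = fun h : E => 3 * ‖h‖ * ⟪h, v⟫ := by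
      funext h; simp
    rw [hsim, Asymptotics.isLittleO_iff]
    intro c hc
    filter_upwards [Metric.ball_mem_nhds (0 : E)
      (show (0:ℝ) < c / (3 * ‖v‖ + 1) by positivity)] with y hy
    have h1 : ‖y‖ < c / (3 * ‖v‖ + 1) := by simpa [dist_zero_right] using hy
    have h4 : (0:ℝ) ≤ ‖y‖ := norm_nonneg y
    have hv : (0:ℝ) ≤ ‖v‖ := norm_nonneg v
    have hcs : |⟪y, v⟫| ≤ ‖y‖ * ‖v‖ := abs_real_inner_le_norm y v
    have hb : ‖(3 * ‖y‖ * ⟪y, v⟫ : ℝ)‖ ≤ 3 * ‖y‖ * (‖y‖ * ‖v‖) := by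
      rw [Real.norm_eq_abs, abs_mul, abs_mul]
      have : |(3:ℝ)| * |(‖y‖ : ℝ)| = 3 * ‖y‖ := by
        rw [abs_of_nonneg (by norm_num : (0:ℝ) ≤ 3), abs_of_nonneg h4]
      rw [this]
      exact mul_le_mul_of_nonneg_left hcs (by positivity)
    refine hb.trans ?_
    have h2 : ‖y‖ * (3 * ‖v‖ + 1) < c :=
      (lt_div_iff₀ (by positivity)).mp h1
    nlinarith
  · have hx' : ‖x‖ ≠ 0 := norm_ne_zero_iff.2 hx
    have h1 : HasFDerivAt (fun y : E => 3 * ‖y‖) ((3 : ℝ) • (‖x‖⁻¹ • innerSL ℝ x)) x :=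
      (norm_hasFDerivAt hx).const_mul 3
    have h2 : HasFDerivAt (fun y : E => ⟪y, v⟫) (innerSL ℝ v) x := by
      have h3 : (fun y : E => ⟪y, v⟫) = fun y : E => (innerSL ℝ v) y := by
        funext y
        simp [real_inner_comm, mul_comm]
      rw [h3]
      exact (innerSL ℝ v).hasFDerivAt
    have h := h1.mul h2
    refine h.congr_fderiv ?_
    ext w
    simp only [ContinuousLinearMap.add_apply, ContinuousLinearMap.coe_smul', Pi.smul_apply,
      smul_eq_mul, innerSL_apply_apply]
    ring

lemma cube_fderiv_apply_continuous (v w : E) :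
    Continuous (fun x : E => 3 * ‖x‖⁻¹ * ⟪x, v⟫ * ⟪x, w⟫ + 3 * ‖x‖ * ⟪v, w⟫) := by
  rw [continuous_iff_continuousAt]
  intro x
  rcases eq_or_ne x 0 with rfl | hx
  · have hval : (3:ℝ) * ‖(0:E)‖⁻¹ * ⟪(0:E), v⟫ * ⟪(0:E), w⟫ + 3 * ‖(0:E)‖ * ⟪v, w⟫ = 0 := by
      simp
    unfold ContinuousAt
    simp only [hval]
    apply squeeze_zero_norm (a := fun y : E => 6 * (‖y‖ * ‖v‖ * ‖w‖))
    · intro y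
      rcases eq_or_ne y 0 with rfl | hy
      · simp
      · have hy' : (0:ℝ) < ‖y‖ := norm_pos_iff.2 hy
        have hcs1 : |⟪y, v⟫| ≤ ‖y‖ * ‖v‖ := abs_real_inner_le_norm y v
        have hcs2 : |⟪y, w⟫| ≤ ‖y‖ * ‖w‖ := abs_real_inner_le_norm y w
        have hcs3 : |⟪v, w⟫| ≤ ‖v‖ * ‖w‖ := abs_real_inner_le_norm v w
        have key : |⟪y, v⟫| * |⟪y, w⟫| ≤ (‖y‖ * ‖v‖) * (‖y‖ * ‖w‖) :=
          mul_le_mul hcs1 hcs2 (abs_nonneg _) (by positivity)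
        have hinv : ‖y‖⁻¹ * (‖y‖ * ‖y‖) = ‖y‖ := by field_simp
        have habs1 : |(3:ℝ) * ‖y‖⁻¹ * ⟪y, v⟫ * ⟪y, w⟫| = 3 * ‖y‖⁻¹ * (|⟪y, v⟫| * |⟪y, w⟫|) := by
          rw [abs_mul, abs_mul, abs_mul, abs_of_nonneg (by norm_num : (0:ℝ) ≤ 3),
            abs_of_nonneg (inv_nonneg.2 hy'.le)]
          ring
        have habs2 : |(3:ℝ) * ‖y‖ * ⟪v, w⟫| = 3 * ‖y‖ * |⟪v, w⟫| := by
          rw [abs_mul, abs_mul, abs_of_nonneg (by norm_num : (0:ℝ) ≤ 3),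
            abs_of_nonneg hy'.le]
        have t1 : 3 * ‖y‖⁻¹ * (|⟪y, v⟫| * |⟪y, w⟫|) ≤ 3 * (‖y‖ * ‖v‖ * ‖w‖) := by
          have hmul := mul_le_mul_of_nonneg_left key (inv_nonneg.2 hy'.le)
          calc 3 * ‖y‖⁻¹ * (|⟪y, v⟫| * |⟪y, w⟫|)
              = 3 * (‖y‖⁻¹ * (|⟪y, v⟫| * |⟪y, w⟫|)) := by ring
            _ ≤ 3 * (‖y‖⁻¹ * ((‖y‖ * ‖v‖) * (‖y‖ * ‖w‖))) := by linarith
            _ = 3 * ((‖y‖⁻¹ * (‖y‖ * ‖y‖)) * (‖v‖ * ‖w‖)) := by ring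
            _ = 3 * (‖y‖ * (‖v‖ * ‖w‖)) := by rw [hinv]
            _ = 3 * (‖y‖ * ‖v‖ * ‖w‖) := by ring
        have t2 : 3 * ‖y‖ * |⟪v, w⟫| ≤ 3 * (‖y‖ * ‖v‖ * ‖w‖) := by nlinarith
        calc ‖(3 * ‖y‖⁻¹ * ⟪y, v⟫ * ⟪y, w⟫ + 3 * ‖y‖ * ⟪v, w⟫ : ℝ)‖
            = |3 * ‖y‖⁻¹ * ⟪y, v⟫ * ⟪y, w⟫ + 3 * ‖y‖ * ⟪v, w⟫| := Real.norm_eq_abs _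
          _ ≤ |3 * ‖y‖⁻¹ * ⟪y, v⟫ * ⟪y, w⟫| + |3 * ‖y‖ * ⟪v, w⟫| := abs_add_le _ _
          _ ≤ 6 * (‖y‖ * ‖v‖ * ‖w‖) := by rw [habs1, habs2]; linarith
    · have h := (continuous_norm.tendsto (0 : E)).const_mul (6 * ‖v‖ * ‖w‖)
      simp only [norm_zero, mul_zero] at h
      convert h using 2 with y
      · ring
  · have hx' : ‖x‖ ≠ 0 := norm_ne_zero_iff.2 hx
    have c1 : ContinuousAt (fun y : E => 3 * ‖y‖⁻¹ * ⟪y, v⟫ * ⟪y, w⟫) x := by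
      refine ContinuousAt.mul (ContinuousAt.mul (ContinuousAt.mul continuousAt_const
        (continuous_norm.continuousAt.inv₀ hx')) ?_) ?_
      · exact (continuous_id.inner continuous_const).continuousAt
      · exact (continuous_id.inner continuous_const).continuousAt
    exact c1.add ((continuousAt_const.mul continuous_norm.continuousAt).mul continuousAt_const)

lemma norm_cube_contDiff : ContDiff ℝ 2 (fun x : E => ‖x‖ ^ 3) := by
  rw [show (2 : WithTop ℕ∞) = 1 + 1 by norm_num, contDiff_succ_iff_fderiv_apply]
  refine ⟨fun x => (norm_cube_hasFDerivAt x).differentiableAt, by simp, fun v => ?_⟩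
  have hf : (fun x : E => fderiv ℝ (fun y : E => ‖y‖ ^ 3) x v)
      = fun x : E => 3 * ‖x‖ * ⟪x, v⟫ := by
    funext x
    rw [(norm_cube_hasFDerivAt x).fderiv]
    simp [mul_assoc]
  rw [hf, show (1 : WithTop ℕ∞) = 0 + 1 by norm_num, contDiff_succ_iff_fderiv_apply]
  refine ⟨fun x => (cube_fderiv_hasFDerivAt v x).differentiableAt, by simp, fun w => ?_⟩
  have hg : (fun x : E => fderiv ℝ (fun y : E => 3 * ‖y‖ * ⟪y, v⟫) x w)
      = fun x : E => 3 * ‖x‖⁻¹ * ⟪x, v⟫ * ⟪x, w⟫ + 3 * ‖x‖ * ⟪v, w⟫ := by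
    funext x
    rw [(cube_fderiv_hasFDerivAt v x).fderiv]
    simp only [ContinuousLinearMap.add_apply, ContinuousLinearMap.coe_smul', Pi.smul_apply,
      smul_eq_mul, innerSL_apply_apply]
  rw [hg, contDiff_zero]
  exact cube_fderiv_apply_continuous v w

/-- For any shape parameter `ε > 0`, the Wendland C² radial kernel
`Φ(x) = (1 - ε‖x‖₂)₊⁴ (4ε‖x‖₂ + 1)` is of class C² on all of `ℝ³`. -/
theorem wendland_c2_radial_contDiff (ε : ℝ) (hε : 0 < ε) :
    ContDiff ℝ 2 (fun x : EuclideanSpace ℝ (Fin 3) =>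
      (max (1 - ε * ‖x‖) 0) ^ 4 * (4 * ε * ‖x‖ + 1)) := by
  rw [contDiff_iff_contDiffAt]
  intro x
  rcases eq_or_ne x 0 with rfl | hx
  · -- at the origin: the function agrees on a neighborhood with a polynomial in
    -- `‖y‖ ^ 2` and `‖y‖ ^ 3`, which is C².
    have h2 : ContDiff ℝ 2 (fun y : E => ‖y‖ ^ 2) := contDiff_norm_sq ℝ
    have hsmooth : ContDiffAt ℝ 2 (fun y : E =>
        1 - 10 * ε ^ 2 * ‖y‖ ^ 2 + (20 * ε ^ 3 + 4 * ε ^ 5 * ‖y‖ ^ 2) * ‖y‖ ^ 3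
          - 15 * ε ^ 4 * (‖y‖ ^ 2) ^ 2) 0 := by
      refine ContDiff.contDiffAt ?_
      exact ((contDiff_const.sub (contDiff_const.mul h2)).add
        (((contDiff_const.add (contDiff_const.mul h2)).mul norm_cube_contDiff))).sub
        (contDiff_const.mul (h2.pow 2))
    apply hsmooth.congr_of_eventuallyEq
    filter_upwards [Metric.ball_mem_nhds (0 : E) (show (0:ℝ) < ε⁻¹ by positivity)] with y hy
    have h1 : ‖y‖ < ε⁻¹ := by simpa [dist_zero_right] using hy
    have h2' : ε * ‖y‖ < 1 := by
      have := (mul_lt_mul_of_pos_left h1 hε)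
      rwa [mul_inv_cancel₀ hε.ne'] at this
    have h3 : max (1 - ε * ‖y‖) 0 = 1 - ε * ‖y‖ := max_eq_left (by linarith)
    rw [h3]
    ring
  · -- away from the origin: composition of the C² profile with the smooth norm.
    have hg := wendland_g_contDiff
    have hn : ContDiffAt ℝ 2 (fun y : E => ε * ‖y‖) x :=
      contDiffAt_const.mul (contDiffAt_norm ℝ hx)
    have hcomp := hg.contDiffAt.comp x hn
    apply hcomp.congr_of_eventuallyEq
    refine Filter.Eventually.of_forall fun y => ?_
    show (max (1 - ε * ‖y‖) 0) ^ 4 * (4 * ε * ‖y‖ + 1)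
      = (max (1 - ε * ‖y‖) 0) ^ 4 * (4 * (ε * ‖y‖) + 1)
    ring
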